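/- Corollary 2.4: if a, A ∈ K with Re(conj(a)·A) > 0 and x, y, z ∈ X satisfy Re(Ay − x, x − ay | z) ≥ 0, then 0 ≤ ‖x|z‖²‖y|z‖² − |(x, y | z)|² ≤ (1/4)·(|A − a|²/Re(conj(a)A))·|(x, y | z)|². -/

import Mathlib

open RCLike

/-- A 2-inner product space over `𝕜 = ℝ` or `ℂ`. -/
structure TwoIP (𝕜 : Type) (X : Type) [RCLike 𝕜] [AddCommGroup X] [Module 𝕜 X] where
  ip : X → X → X → 𝕜
  re_nonneg : ∀ x z : X, 0 ≤ re (ip x x z)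
  im_zero : ∀ x z : X, im (ip x x z) = 0
  eq_zero_iff : ∀ x z : X, ip x x z = 0 ↔ ¬ LinearIndependent 𝕜 ![x, z]
  swap : ∀ x z : X, ip x x z = ip z z x
  conj_symm : ∀ x y z : X, ip x y z = (starRingEnd 𝕜) (ip y x z)
  smul_left : ∀ (α : 𝕜) (x y z : X), ip (α • x) y z = α * ip x y z
  add_left : ∀ x x' y z : X, ip (x + x') y z = ip x y z + ip x' y z

/-- Purely real-variable version of the inequality. -/
lemma real_ineq (p q r K M n : ℝ) (hp : 0 ≤ p) (hq : 0 ≤ q) (hr : 0 < r)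
    (cs : n * n ≤ q * p) (key : p + r * q ≤ K * n) (hK : K ^ 2 = M + 4 * r) (hM : 0 ≤ M) :
    0 ≤ p * q - n ^ 2 ∧ p * q - n ^ 2 ≤ (1/4) * (M / r) * n ^ 2 := by
  constructor
  · nlinarith [cs]
  · have h1 : (p + r * q) * (p + r * q) ≤ (K * n) * (K * n) :=
      mul_self_le_mul_self (by nlinarith) key
    have h2 : 4 * r * (p * q) ≤ (M + 4 * r) * n ^ 2 := by nlinarith [sq_nonneg (p - r * q)]
    have h3 : p * q - n ^ 2 ≤ M * n ^ 2 / (4 * r) := by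
      rw [le_div_iff₀ (by linarith : (0:ℝ) < 4 * r)]
      nlinarith [h2]
    have hEq : (1/4) * (M / r) * n ^ 2 = M * n ^ 2 / (4 * r) := by
      field_simp
    rw [hEq]; exact h3

theorem stmt {𝕜 X : Type} [RCLike 𝕜] [AddCommGroup X] [Module 𝕜 X]
    (T : TwoIP 𝕜 X) (hdim : 1 < Module.rank 𝕜 X) (x y z : X) (a A : 𝕜)
    (ha : 0 < re ((starRingEnd 𝕜) a * A))
    (h : 0 ≤ re (T.ip (A • y - x) (x - a • y) z)) :
    0 ≤ Real.sqrt (re (T.ip x x z)) ^ 2 * Real.sqrt (re (T.ip y y z)) ^ 2 - ‖T.ip x y z‖ ^ 2 ∧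
    Real.sqrt (re (T.ip x x z)) ^ 2 * Real.sqrt (re (T.ip y y z)) ^ 2 - ‖T.ip x y z‖ ^ 2
      ≤ (1/4) * (‖A - a‖ ^ 2 / re ((starRingEnd 𝕜) a * A)) * ‖T.ip x y z‖ ^ 2 := by
  -- derived linearity facts
  have conj' : ∀ u v : X, (starRingEnd 𝕜) (T.ip u v z) = T.ip v u z := fun u v => by
    rw [T.conj_symm u v z, RCLike.conj_conj]
  have addr : ∀ u v w : X, T.ip u (v + w) z = T.ip u v z + T.ip u w z := fun u v w => by
    rw [T.conj_symm u (v + w) z, T.add_left, map_add, ← T.conj_symm u v z, ← T.conj_symm u w z]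
  have smulr : ∀ (α : 𝕜) (u v : X), T.ip u (α • v) z = (starRingEnd 𝕜) α * T.ip u v z :=
    fun α u v => by
      rw [T.conj_symm u (α • v) z, T.smul_left, map_mul, ← T.conj_symm u v z]
  have subl : ∀ u v w : X, T.ip (u - v) w z = T.ip u w z - T.ip v w z := fun u v w => by
    rw [sub_eq_add_neg, T.add_left, ← neg_one_smul 𝕜 v, T.smul_left]; ring
  have subr : ∀ u v w : X, T.ip u (v - w) z = T.ip u v z - T.ip u w z := fun u v w => by
    rw [sub_eq_add_neg, addr, ← neg_one_smul 𝕜 w, smulr]; simp [sub_eq_add_neg]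
  -- Cauchy-Schwarz via mathlib's PreInnerProductSpace.Core
  let c : PreInnerProductSpace.Core 𝕜 X :=
    { inner := fun u v => T.ip v u z
      conj_inner_symm := fun u v => (T.conj_symm v u z).symm
      re_inner_nonneg := fun u => T.re_nonneg u z
      add_left := fun u u' v => addr v u u'
      smul_left := fun u v r => smulr r v u }
  have cs0 : ‖T.ip x y z‖ * ‖T.ip y x z‖ ≤ re (T.ip y y z) * re (T.ip x x z) :=
    @InnerProductSpace.Core.inner_mul_inner_self_le 𝕜 X _ _ _ c y x
  have hyx : T.ip y x z = (starRingEnd 𝕜) (T.ip x y z) := T.conj_symm y x z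
  have cs : ‖T.ip x y z‖ * ‖T.ip x y z‖ ≤ re (T.ip y y z) * re (T.ip x x z) := by
    rwa [hyx, RCLike.norm_conj] at cs0
  -- the diagonal entries are real
  have ipyy : T.ip y y z = ((re (T.ip y y z) : ℝ) : 𝕜) := by
    apply RCLike.ext <;> simp [T.im_zero]
  -- expand the hypothesis h
  have expand : T.ip (A • y - x) (x - a • y) z
      = A * (starRingEnd 𝕜) (T.ip x y z) - A * (starRingEnd 𝕜) a * T.ip y y z
        - T.ip x x z + (starRingEnd 𝕜) a * T.ip x y z := by
    simp only [subl, subr, T.smul_left, smulr]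
    rw [hyx]; ring
  have e1 : re (A * (starRingEnd 𝕜) a * T.ip y y z)
      = re ((starRingEnd 𝕜) a * A) * re (T.ip y y z) := by
    rw [ipyy, mul_comm (A * (starRingEnd 𝕜) a), RCLike.re_ofReal_mul,
      mul_comm A ((starRingEnd 𝕜) a), mul_comm]
    simp
  have e2 : re ((starRingEnd 𝕜) a * T.ip x y z)
      = re (a * (starRingEnd 𝕜) (T.ip x y z)) := by
    rw [show (starRingEnd 𝕜) a * T.ip x y z
        = (starRingEnd 𝕜) (a * (starRingEnd 𝕜) (T.ip x y z)) by
      rw [map_mul, RCLike.conj_conj], RCLike.conj_re]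
  rw [expand, map_add, map_sub, map_sub, e1, e2] at h
  have e3 : re ((A + a) * (starRingEnd 𝕜) (T.ip x y z))
      = re (A * (starRingEnd 𝕜) (T.ip x y z)) + re (a * (starRingEnd 𝕜) (T.ip x y z)) := by
    rw [add_mul, map_add]
  have key : re (T.ip x x z) + re ((starRingEnd 𝕜) a * A) * re (T.ip y y z)
      ≤ ‖A + a‖ * ‖T.ip x y z‖ := by
    have h4 : re (T.ip x x z) + re ((starRingEnd 𝕜) a * A) * re (T.ip y y z)
        ≤ re ((A + a) * (starRingEnd 𝕜) (T.ip x y z)) := by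
      rw [e3]; linarith
    calc re (T.ip x x z) + re ((starRingEnd 𝕜) a * A) * re (T.ip y y z)
        ≤ re ((A + a) * (starRingEnd 𝕜) (T.ip x y z)) := h4
      _ ≤ ‖(A + a) * (starRingEnd 𝕜) (T.ip x y z)‖ :=
          (le_abs_self _).trans (RCLike.abs_re_le_norm _)
      _ = ‖A + a‖ * ‖T.ip x y z‖ := by rw [norm_mul, RCLike.norm_conj]
  have normid : ‖A + a‖ ^ 2 = ‖A - a‖ ^ 2 + 4 * re ((starRingEnd 𝕜) a * A) := by
    simp only [RCLike.norm_sq_eq_def, map_add, map_sub, RCLike.mul_re,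
      RCLike.conj_re, RCLike.conj_im]
    ring
  have main := real_ineq (re (T.ip x x z)) (re (T.ip y y z)) (re ((starRingEnd 𝕜) a * A))
    (‖A + a‖) (‖A - a‖ ^ 2) (‖T.ip x y z‖) (T.re_nonneg x z) (T.re_nonneg y z) ha
    cs key normid (sq_nonneg _)
  rw [Real.sq_sqrt (T.re_nonneg x z), Real.sq_sqrt (T.re_nonneg y z)]
  exact main
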